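/- arXiv:math/0410415 — 2 statements merged into one kernel-verified Lean document; each statement's English description precedes it below -/
import Mathlib

section
/- For u_N(x,t) = (e^{N²t} − 1) sin(N x₁) and f_N(x,t) = N² sin(N x₁) on Q' = [−π,π]^n × (0,1), the ratio ‖D₁² u_N‖_{L²(Q')} / (‖u_N‖_{L²(Q')} + ‖f_N‖_{L²(Q')}) tends to infinity as N → ∞; in fact ‖D₁²u_N‖_{L²(Q')} ≥ c N e^{N²} while ‖u_N‖_{L²(Q')} + ‖f_N‖_{L²(Q')} ≤ C N^{−1} e^{N²} for large N, with constants c, C > 0 independent of N. -/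
open MeasureTheory
open scoped Real

lemma sin_sq_Icc (N : ℕ) (hN : 1 ≤ N) :
    ∫ x in Set.Icc (-π) π, Real.sin (N * x) ^ 2 = π := by
  have hc : (N : ℝ) ≠ 0 := by positivity
  rw [MeasureTheory.integral_Icc_eq_integral_Ioc,
    ← intervalIntegral.integral_of_le (by linarith [Real.pi_pos] : -π ≤ π)]
  rw [show (fun x => Real.sin ((N:ℝ) * x) ^ 2) = fun x => (fun y => Real.sin y ^ 2) ((N:ℝ) * x)
    from rfl, intervalIntegral.integral_comp_mul_left (fun y => Real.sin y ^ 2) hc,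
    integral_sin_sq]
  have h1 : Real.sin ((N:ℝ) * π) = 0 := Real.sin_nat_mul_pi N
  have h2 : Real.sin ((N:ℝ) * -π) = 0 := by
    rw [show (N:ℝ) * -π = -((N:ℝ)*π) by ring, Real.sin_neg, h1, neg_zero]
  rw [h1, h2]
  simp only [smul_eq_mul, one_div, zero_mul, sub_zero, mul_neg, sub_neg_eq_add, zero_add, sub_self]
  rw [← two_mul, mul_div_cancel_left₀ _ two_ne_zero, inv_mul_cancel_left₀ hc]

lemma box_int (n : ℕ) (i0 : Fin n) (f : ℝ → ℝ) :
    ∫ x : Fin n → ℝ in Set.univ.pi (fun _ => Set.Icc (-π) π), f (x i0)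
      = (2*π)^(n-1) * ∫ x in Set.Icc (-π) π, f x := by
  classical
  have hms : MeasurableSet (Set.univ.pi fun _ : Fin n => Set.Icc (-π) π) :=
    MeasurableSet.univ_pi (fun _ => measurableSet_Icc)
  set g : Fin n → ℝ → ℝ := fun i y =>
    if i = i0 then (Set.Icc (-π) π).indicator f y else (Set.Icc (-π) π).indicator 1 y with hg
  have hpt : ∀ x : Fin n → ℝ,
      (Set.univ.pi fun _ : Fin n => Set.Icc (-π) π).indicator (fun x => f (x i0)) x
        = ∏ i, g i (x i) := by
    intro x
    by_cases hx : x ∈ Set.univ.pi fun _ : Fin n => Set.Icc (-π) π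
    · rw [Set.indicator_of_mem hx]
      have hxi : ∀ i, x i ∈ Set.Icc (-π) π := fun i => hx i (Set.mem_univ i)
      rw [Finset.prod_eq_single i0]
      · simp [hg, Set.indicator_of_mem (hxi i0)]
      · intro b _ hb
        simp [hg, hb, Set.indicator_of_mem (hxi b)]
      · simp
    · rw [Set.indicator_of_notMem hx]
      rw [Set.mem_univ_pi] at hx
      push_neg at hx
      obtain ⟨j, hj⟩ := hx
      refine (Finset.prod_eq_zero (Finset.mem_univ j) ?_).symm
      by_cases hji : j = i0
      · simp only [hg]
        rw [if_pos hji, Set.indicator_of_notMem hj]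
      · simp only [hg]
        rw [if_neg hji, Set.indicator_of_notMem hj]
  have hone : ∫ y : ℝ, (Set.Icc (-π) π).indicator (1 : ℝ → ℝ) y = 2*π := by
    rw [MeasureTheory.integral_indicator measurableSet_Icc]
    simp only [Pi.one_apply, MeasureTheory.setIntegral_const, smul_eq_mul, mul_one,
      Real.volume_Icc]
    rw [MeasureTheory.measureReal_def, Real.volume_Icc, ENNReal.toReal_ofReal (by linarith [Real.pi_pos] : (0:ℝ) ≤ π - -π)]
    ring
  have herase : ∀ i ∈ Finset.univ.erase i0, (∫ y : ℝ, g i y) = 2*π := by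
    intro i hi
    simp only [hg, if_neg (Finset.ne_of_mem_erase hi)]
    exact hone
  rw [← MeasureTheory.integral_indicator hms]
  calc ∫ x : Fin n → ℝ, (Set.univ.pi fun _ : Fin n => Set.Icc (-π) π).indicator
        (fun x => f (x i0)) x
      = ∫ x : Fin n → ℝ, ∏ i, g i (x i) := by simp_rw [hpt]
    _ = ∏ i, ∫ y : ℝ, g i y := MeasureTheory.integral_fintype_prod_eq_prod g
    _ = (∫ y : ℝ, g i0 y) * ∏ i ∈ Finset.univ.erase i0, ∫ y : ℝ, g i y :=
        (Finset.mul_prod_erase _ _ (Finset.mem_univ i0)).symm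
    _ = (2*π)^(n-1) * ∫ x in Set.Icc (-π) π, f x := by
        rw [Finset.prod_congr rfl herase, Finset.prod_const,
          Finset.card_erase_of_mem (Finset.mem_univ i0), Finset.card_univ, Fintype.card_fin]
        simp only [hg, if_pos rfl]
        rw [MeasureTheory.integral_indicator measurableSet_Icc]
        ring

lemma exp_int (c : ℝ) (hc : c ≠ 0) :
    ∫ t in (0:ℝ)..1, Real.exp (c*t) = (Real.exp c - 1)/c := by
  rw [show (fun t => Real.exp (c*t)) = fun t => Real.exp (c*t) from rfl,
    intervalIntegral.integral_comp_mul_left Real.exp hc]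
  simp [integral_exp, smul_eq_mul]
  field_simp

lemma time_int (a : ℝ) (ha : a ≠ 0) :
    ∫ t in Set.Ioo (0:ℝ) 1, (Real.exp (a*t) - 1)^2
      = (Real.exp (2*a) - 1)/(2*a) - 2*((Real.exp a - 1)/a) + 1 := by
  rw [MeasureTheory.restrict_Ioo_eq_restrict_Ioc,
    ← intervalIntegral.integral_of_le (zero_le_one)]
  have hpt : ∀ t : ℝ, (Real.exp (a*t) - 1)^2 = Real.exp ((2*a)*t) - 2*Real.exp (a*t) + 1 := by
    intro t
    rw [show (2*a)*t = a*t + a*t by ring, Real.exp_add]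
    ring
  simp_rw [hpt]
  have i1 : IntervalIntegrable (fun t => Real.exp ((2*a)*t)) volume 0 1 :=
    (Real.continuous_exp.comp (continuous_const.mul continuous_id)).intervalIntegrable 0 1
  have i2 : IntervalIntegrable (fun t => 2*Real.exp (a*t)) volume 0 1 :=
    (continuous_const.mul (Real.continuous_exp.comp
      (continuous_const.mul continuous_id))).intervalIntegrable 0 1
  rw [intervalIntegral.integral_add (i1.sub i2) (intervalIntegrable_const),
    intervalIntegral.integral_sub i1 i2, intervalIntegral.integral_const_mul,
    exp_int (2*a) (by simpa using ha), exp_int a ha]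
  simp


lemma split_int (n : ℕ) (i0 : Fin n) (g h : ℝ → ℝ) (F : (Fin n → ℝ) × ℝ → ℝ)
    (hF : ∀ z, F z = g (z.1 i0) * h z.2) :
    ∫ z in ((Set.univ.pi fun _ : Fin n => Set.Icc (-π) π) ×ˢ Set.Ioo (0:ℝ) 1), F z
      = ((2*π)^(n-1) * ∫ x in Set.Icc (-π) π, g x) * ∫ t in Set.Ioo (0:ℝ) 1, h t := by
  have h1 : ∫ z in ((Set.univ.pi fun _ : Fin n => Set.Icc (-π) π) ×ˢ Set.Ioo (0:ℝ) 1), F z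
      = ∫ z in ((Set.univ.pi fun _ : Fin n => Set.Icc (-π) π) ×ˢ Set.Ioo (0:ℝ) 1),
          g (z.1 i0) * h z.2 :=
    MeasureTheory.integral_congr_ae (Filter.Eventually.of_forall fun z => hF z)
  rw [h1, ← box_int n i0 g, MeasureTheory.Measure.volume_eq_prod]
  exact MeasureTheory.setIntegral_prod_mul (fun x : Fin n → ℝ => g (x i0)) h _ _

lemma main_bounds (n : ℕ) (hn : 1 ≤ n) (N : ℕ) (hN : 2 ≤ N) :
    (Real.sqrt ((2*π)^(n-1)*π)/2 * N * Real.exp ((N:ℝ)^2) ≤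
      Real.sqrt (∫ z in ((Set.univ.pi fun _ : Fin n => Set.Icc (-π) π) ×ˢ Set.Ioo (0:ℝ) 1),
        ((N : ℝ) ^ 2 * (Real.exp ((N : ℝ) ^ 2 * z.2) - 1) * Real.sin (N * z.1 ⟨0, hn⟩)) ^ 2)) ∧
    (Real.sqrt (∫ z in ((Set.univ.pi fun _ : Fin n => Set.Icc (-π) π) ×ˢ Set.Ioo (0:ℝ) 1),
        ((Real.exp ((N : ℝ) ^ 2 * z.2) - 1) * Real.sin (N * z.1 ⟨0, hn⟩)) ^ 2) +
      Real.sqrt (∫ z in ((Set.univ.pi fun _ : Fin n => Set.Icc (-π) π) ×ˢ Set.Ioo (0:ℝ) 1),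
        ((N : ℝ) ^ 2 * Real.sin (N * z.1 ⟨0, hn⟩)) ^ 2) ≤
      2*Real.sqrt ((2*π)^(n-1)*π) * (N : ℝ)⁻¹ * Real.exp ((N:ℝ)^2)) ∧
    0 < Real.sqrt (∫ z in ((Set.univ.pi fun _ : Fin n => Set.Icc (-π) π) ×ˢ Set.Ioo (0:ℝ) 1),
        ((N : ℝ) ^ 2 * Real.sin (N * z.1 ⟨0, hn⟩)) ^ 2) := by
  have hNR : (2:ℝ) ≤ (N:ℝ) := by exact_mod_cast hN
  have hN0 : (0:ℝ) < N := by linarith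
  have hN1 : 1 ≤ N := le_trans one_le_two hN
  have hπ : (0:ℝ) < π := Real.pi_pos
  have hP : (0:ℝ) < (2*π)^(n-1)*π := by positivity
  have hsin := sin_sq_Icc N hN1
  have ha : ((N:ℝ)^2) ≠ 0 := by positivity
  have ha4 : (4:ℝ) ≤ (N:ℝ)^2 := by nlinarith
  set E : ℝ := Real.exp ((N:ℝ)^2) with hE
  have hE1 : (1:ℝ) ≤ E := Real.one_le_exp (by positivity)
  have hE0 : (0:ℝ) < E := Real.exp_pos _
  have hE9 : (9:ℝ) ≤ E := by
    have h2 : (3:ℝ) ≤ Real.exp 2 := by nlinarith [Real.add_one_le_exp (2:ℝ)]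
    have h4 : (9:ℝ) ≤ Real.exp 4 := by
      rw [show (4:ℝ) = 2+2 by norm_num, Real.exp_add]; nlinarith
    exact le_trans h4 (Real.exp_le_exp.mpr ha4)
  have h2a : Real.exp (2*(N:ℝ)^2) = E^2 := by rw [two_mul, Real.exp_add, hE]; ring
  set A : ℝ := (Real.exp (2*(N:ℝ)^2) - 1)/(2*(N:ℝ)^2) - 2*((Real.exp ((N:ℝ)^2) - 1)/((N:ℝ)^2)) + 1
    with hA
  have htime := time_int ((N:ℝ)^2) ha
  -- bounds on A
  have hA_lb : E^2/(4*(N:ℝ)^2) ≤ A := by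
    have hnum : (0:ℝ) ≤ E^2 - 8*E + 6 + 4*(N:ℝ)^2 := by nlinarith
    have key : A - E^2/(4*(N:ℝ)^2) = (E^2 - 8*E + 6 + 4*(N:ℝ)^2)/(4*(N:ℝ)^2) := by
      rw [hA, h2a, ← hE]; field_simp; ring
    linarith [div_nonneg hnum (by positivity : (0:ℝ) ≤ 4*(N:ℝ)^2), key]
  have hA_ub : A ≤ E^2/(N:ℝ)^2 := by
    have h2a2 : 2*(N:ℝ)^2 + 1 ≤ E^2 := by
      have := Real.add_one_le_exp (2*(N:ℝ)^2); rw [h2a] at this; linarith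
    have key2 : E^2/(N:ℝ)^2 - A = (E^2 + 4*E - 3 - 2*(N:ℝ)^2)/(2*(N:ℝ)^2) := by
      rw [hA, h2a, ← hE]; field_simp; ring
    have hnum2 : (0:ℝ) ≤ E^2 + 4*E - 3 - 2*(N:ℝ)^2 := by linarith
    linarith [div_nonneg hnum2 (by positivity : (0:ℝ) ≤ 2*(N:ℝ)^2), key2]
  have hA_pos : 0 < A := lt_of_lt_of_le (by positivity) hA_lb
  -- sqrt bounds on A
  have sqrt_lb : E/(2*(N:ℝ)) ≤ Real.sqrt A := by
    have h2 : Real.sqrt (E^2/(4*(N:ℝ)^2)) = E/(2*(N:ℝ)) := by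
      rw [show E^2/(4*(N:ℝ)^2) = (E/(2*(N:ℝ)))^2 by field_simp; ring]
      exact Real.sqrt_sq (by positivity)
    rw [← h2]; exact Real.sqrt_le_sqrt hA_lb
  have sqrt_ub : Real.sqrt A ≤ E/(N:ℝ) := by
    have h2 : Real.sqrt (E^2/(N:ℝ)^2) = E/(N:ℝ) := by
      rw [show E^2/(N:ℝ)^2 = (E/(N:ℝ))^2 by field_simp]
      exact Real.sqrt_sq (by positivity)
    rw [← h2]; exact Real.sqrt_le_sqrt hA_ub
  -- integral values
  have hD : (∫ z in ((Set.univ.pi fun _ : Fin n => Set.Icc (-π) π) ×ˢ Set.Ioo (0:ℝ) 1),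
      ((N : ℝ) ^ 2 * (Real.exp ((N : ℝ) ^ 2 * z.2) - 1) * Real.sin (N * z.1 ⟨0, hn⟩)) ^ 2)
      = ((2*π)^(n-1)*π)*((N:ℝ)^4*A) := by
    rw [show (∫ z in ((Set.univ.pi fun _ : Fin n => Set.Icc (-π) π) ×ˢ Set.Ioo (0:ℝ) 1),
        ((N : ℝ) ^ 2 * (Real.exp ((N : ℝ) ^ 2 * z.2) - 1) * Real.sin (N * z.1 ⟨0, hn⟩)) ^ 2)
        = ((2*π)^(n-1) * ∫ x in Set.Icc (-π) π, Real.sin (N*x)^2) *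
          ∫ t in Set.Ioo (0:ℝ) 1, (N:ℝ)^4 * (Real.exp ((N:ℝ)^2*t)-1)^2
      from split_int n ⟨0, hn⟩ _ _ _ (fun z => by ring)]
    rw [hsin, MeasureTheory.integral_const_mul, htime, ← hA]
  have hu : (∫ z in ((Set.univ.pi fun _ : Fin n => Set.Icc (-π) π) ×ˢ Set.Ioo (0:ℝ) 1),
      ((Real.exp ((N : ℝ) ^ 2 * z.2) - 1) * Real.sin (N * z.1 ⟨0, hn⟩)) ^ 2)
      = ((2*π)^(n-1)*π)*A := by
    rw [show (∫ z in ((Set.univ.pi fun _ : Fin n => Set.Icc (-π) π) ×ˢ Set.Ioo (0:ℝ) 1),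
        ((Real.exp ((N : ℝ) ^ 2 * z.2) - 1) * Real.sin (N * z.1 ⟨0, hn⟩)) ^ 2)
        = ((2*π)^(n-1) * ∫ x in Set.Icc (-π) π, Real.sin (N*x)^2) *
          ∫ t in Set.Ioo (0:ℝ) 1, (Real.exp ((N:ℝ)^2*t)-1)^2
      from split_int n ⟨0, hn⟩ _ _ _ (fun z => by ring)]
    rw [hsin, htime, ← hA]
  have hf : (∫ z in ((Set.univ.pi fun _ : Fin n => Set.Icc (-π) π) ×ˢ Set.Ioo (0:ℝ) 1),
      ((N : ℝ) ^ 2 * Real.sin (N * z.1 ⟨0, hn⟩)) ^ 2)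
      = ((2*π)^(n-1)*π)*(N:ℝ)^4 := by
    rw [show (∫ z in ((Set.univ.pi fun _ : Fin n => Set.Icc (-π) π) ×ˢ Set.Ioo (0:ℝ) 1),
        ((N : ℝ) ^ 2 * Real.sin (N * z.1 ⟨0, hn⟩)) ^ 2)
        = ((2*π)^(n-1) * ∫ x in Set.Icc (-π) π, Real.sin (N*x)^2) *
          ∫ t in Set.Ioo (0:ℝ) 1, (N:ℝ)^4
      from split_int n ⟨0, hn⟩ _ _ _ (fun z => by ring)]
    rw [hsin]
    simp [Real.volume_Ioo]
  refine ⟨?_, ?_, ?_⟩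
  · rw [hD, Real.sqrt_mul hP.le, Real.sqrt_mul (by positivity : (0:ℝ) ≤ (N:ℝ)^4),
      show ((N:ℝ)^4) = ((N:ℝ)^2)^2 by ring, Real.sqrt_sq (by positivity)]
    calc Real.sqrt ((2*π)^(n-1)*π)/2 * N * E
        = Real.sqrt ((2*π)^(n-1)*π) * ((N:ℝ)^2 * (E/(2*(N:ℝ)))) := by field_simp
      _ ≤ Real.sqrt ((2*π)^(n-1)*π) * ((N:ℝ)^2 * Real.sqrt A) := by gcongr
  · rw [hu, hf, Real.sqrt_mul hP.le, Real.sqrt_mul hP.le,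
      show ((N:ℝ)^4) = ((N:ℝ)^2)^2 by ring, Real.sqrt_sq (by positivity)]
    have hN3 : (N:ℝ)^3 ≤ E := by
      have h13 : (N:ℝ) ≤ Real.exp ((N:ℝ)^2/3) := by
        have h := Real.add_one_le_exp ((N:ℝ)^2/3)
        nlinarith [sq_nonneg ((N:ℝ) - 3/2)]
      have hp := pow_le_pow_left₀ (by positivity : (0:ℝ) ≤ (N:ℝ)) h13 3
      calc (N:ℝ)^3 ≤ Real.exp ((N:ℝ)^2/3)^3 := hp
        _ = E := by rw [hE, ← Real.exp_nat_mul]; congr 1; push_cast; ring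
    have hb1 : Real.sqrt ((2*π)^(n-1)*π) * Real.sqrt A ≤ Real.sqrt ((2*π)^(n-1)*π) * (E/(N:ℝ)) := by
      gcongr
    have hb2 : Real.sqrt ((2*π)^(n-1)*π) * (N:ℝ)^2 ≤ Real.sqrt ((2*π)^(n-1)*π) * (E/(N:ℝ)) := by
      gcongr
      rw [le_div_iff₀ hN0]
      have h3 : (N:ℝ)^2 * N = (N:ℝ)^3 := by ring
      linarith
    calc Real.sqrt ((2*π)^(n-1)*π) * Real.sqrt A + Real.sqrt ((2*π)^(n-1)*π) * (N:ℝ)^2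
        ≤ Real.sqrt ((2*π)^(n-1)*π) * (E/(N:ℝ)) + Real.sqrt ((2*π)^(n-1)*π) * (E/(N:ℝ)) := by
          linarith
      _ = 2*Real.sqrt ((2*π)^(n-1)*π) * (N : ℝ)⁻¹ * E := by field_simp; ring
  · rw [hf]
    exact Real.sqrt_pos.mpr (by positivity)

/-- for `u_N(x,t) = (e^{N²t}-1) sin(N x₁)` and `f_N = N² sin(N x₁)` on
`Q' = [-π,π]^n × (0,1)`: `‖D₁²u_N‖_{L²} ≥ c N e^{N²}` while
`‖u_N‖_{L²} + ‖f_N‖_{L²} ≤ C N⁻¹ e^{N²}` for large `N`, hence the ratio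
`‖D₁²u_N‖_{L²} / (‖u_N‖_{L²} + ‖f_N‖_{L²})` tends to infinity. -/
theorem backward_heat_estimate_fails (n : ℕ) (hn : 1 ≤ n) :
    ∀ Q' : Set ((Fin n → ℝ) × ℝ),
      Q' = (Set.univ.pi fun _ : Fin n => Set.Icc (-π) π) ×ˢ Set.Ioo (0 : ℝ) 1 →
    ∃ c C : ℝ, 0 < c ∧ 0 < C ∧ ∃ N₀ : ℕ, (∀ N : ℕ, N₀ ≤ N →
      (c * N * Real.exp ((N : ℝ) ^ 2) ≤
        Real.sqrt (∫ z in Q',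
          ((N : ℝ) ^ 2 * (Real.exp ((N : ℝ) ^ 2 * z.2) - 1) *
            Real.sin (N * z.1 ⟨0, hn⟩)) ^ 2)) ∧
      (Real.sqrt (∫ z in Q',
          ((Real.exp ((N : ℝ) ^ 2 * z.2) - 1) * Real.sin (N * z.1 ⟨0, hn⟩)) ^ 2) +
        Real.sqrt (∫ z in Q', ((N : ℝ) ^ 2 * Real.sin (N * z.1 ⟨0, hn⟩)) ^ 2) ≤
        C * (N : ℝ)⁻¹ * Real.exp ((N : ℝ) ^ 2))) ∧
    Filter.Tendsto
      (fun N : ℕ =>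
        Real.sqrt (∫ z in Q',
          ((N : ℝ) ^ 2 * (Real.exp ((N : ℝ) ^ 2 * z.2) - 1) *
            Real.sin (N * z.1 ⟨0, hn⟩)) ^ 2) /
        (Real.sqrt (∫ z in Q',
            ((Real.exp ((N : ℝ) ^ 2 * z.2) - 1) * Real.sin (N * z.1 ⟨0, hn⟩)) ^ 2) +
          Real.sqrt (∫ z in Q', ((N : ℝ) ^ 2 * Real.sin (N * z.1 ⟨0, hn⟩)) ^ 2)))
      Filter.atTop Filter.atTop := by
  intro Q' hQ'
  subst hQ'
  have hπ : (0:ℝ) < π := Real.pi_pos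
  have hP : (0:ℝ) < (2*π)^(n-1)*π := by positivity
  have hK : (0:ℝ) < Real.sqrt ((2*π)^(n-1)*π) := Real.sqrt_pos.mpr hP
  refine ⟨Real.sqrt ((2*π)^(n-1)*π)/2, 2*Real.sqrt ((2*π)^(n-1)*π), by positivity, by positivity,
    2, fun N hN => ⟨(main_bounds n hn N hN).1, (main_bounds n hn N hN).2.1⟩, ?_⟩
  have hkey : ∀ N : ℕ, 2 ≤ N →
      (Real.sqrt ((2*π)^(n-1)*π)/2) / (2*Real.sqrt ((2*π)^(n-1)*π)) * (N:ℝ)^2 ≤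
        Real.sqrt (∫ z in ((Set.univ.pi fun _ : Fin n => Set.Icc (-π) π) ×ˢ Set.Ioo (0:ℝ) 1),
          ((N : ℝ) ^ 2 * (Real.exp ((N : ℝ) ^ 2 * z.2) - 1) *
            Real.sin (N * z.1 ⟨0, hn⟩)) ^ 2) /
        (Real.sqrt (∫ z in ((Set.univ.pi fun _ : Fin n => Set.Icc (-π) π) ×ˢ Set.Ioo (0:ℝ) 1),
            ((Real.exp ((N : ℝ) ^ 2 * z.2) - 1) * Real.sin (N * z.1 ⟨0, hn⟩)) ^ 2) +
          Real.sqrt (∫ z in ((Set.univ.pi fun _ : Fin n => Set.Icc (-π) π) ×ˢ Set.Ioo (0:ℝ) 1),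
            ((N : ℝ) ^ 2 * Real.sin (N * z.1 ⟨0, hn⟩)) ^ 2)) := by
    intro N hN
    obtain ⟨h1, h2, h3⟩ := main_bounds n hn N hN
    have hNR : (2:ℝ) ≤ (N:ℝ) := by exact_mod_cast hN
    have hN0 : (0:ℝ) < N := by linarith
    have hbpos : 0 < Real.sqrt (∫ z in ((Set.univ.pi fun _ : Fin n => Set.Icc (-π) π) ×ˢ
          Set.Ioo (0:ℝ) 1), ((Real.exp ((N : ℝ) ^ 2 * z.2) - 1) * Real.sin (N * z.1 ⟨0, hn⟩)) ^ 2)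
        + Real.sqrt (∫ z in ((Set.univ.pi fun _ : Fin n => Set.Icc (-π) π) ×ˢ Set.Ioo (0:ℝ) 1),
          ((N : ℝ) ^ 2 * Real.sin (N * z.1 ⟨0, hn⟩)) ^ 2) :=
      add_pos_of_nonneg_of_pos (Real.sqrt_nonneg _) h3
    have heq : (Real.sqrt ((2*π)^(n-1)*π)/2) / (2*Real.sqrt ((2*π)^(n-1)*π)) * (N:ℝ)^2
        = (Real.sqrt ((2*π)^(n-1)*π)/2 * N * Real.exp ((N:ℝ)^2)) /
          (2*Real.sqrt ((2*π)^(n-1)*π) * (N:ℝ)⁻¹ * Real.exp ((N:ℝ)^2)) := by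
      rw [div_mul_eq_mul_div, div_eq_div_iff (by positivity) (by positivity)]
      field_simp
    rw [heq]
    exact div_le_div₀ (Real.sqrt_nonneg _) h1 hbpos h2
  refine Filter.tendsto_atTop_mono' Filter.atTop (Filter.eventually_atTop.mpr ⟨2, hkey⟩) ?_
  exact Filter.Tendsto.const_mul_atTop (by positivity)
    ((Filter.tendsto_pow_atTop two_ne_zero).comp tendsto_natCast_atTop_atTop)
end

section
/- Vanishing of second derivatives of the heat kernel on the parabolic sphere: for the heat kernel G(x,t) = (4πt)^{−n/2} e^{−|x|²/(4t)} (t > 0, extended by 0 for t ≤ 0), the integral of Δ_x G over the unit sphere {(x,t) : max{|x|,|t|^{1/2}} = 1} with respect to surface measure equals the integral of D_t G over the same set; equivalently, ∫_{r₁ < ρ(x,t) < r₂} Δ_x G(x,t) dx dt = 0 for all 0 < r₁ < r₂, where ρ(x,t) = max{|x|, |t|^{1/2}}. -/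
open MeasureTheory
open scoped Real

/-- The heat kernel `G(x,t) = (4πt)^{-n/2} exp(-|x|²/(4t))` for `t > 0`, extended
by `0` for `t ≤ 0`. -/
noncomputable def heatKer (n : ℕ) (z : EuclideanSpace ℝ (Fin n) × ℝ) : ℝ :=
  if 0 < z.2 then (4 * π * z.2) ^ (-(n : ℝ) / 2) * Real.exp (-‖z.1‖ ^ 2 / (4 * z.2))
  else 0

/-- The spatial Laplacian `Δ_x G` at `z = (x,t)`. -/
noncomputable def heatKerLap (n : ℕ) (z : EuclideanSpace ℝ (Fin n) × ℝ) : ℝ :=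
  ∑ i : Fin n,
    iteratedDeriv 2 (fun s : ℝ => heatKer n (z.1 + s • EuclideanSpace.single i 1, z.2)) 0

section Aux

open Filter Set
open scoped Topology RealInnerProductSpace

/-- Explicit formula for the spatial Laplacian of the heat kernel. -/
noncomputable def heatPhi (n : ℕ) (z : EuclideanSpace ℝ (Fin n) × ℝ) : ℝ :=
  if 0 < z.2 then (4 * π * z.2) ^ (-(n : ℝ) / 2) * Real.exp (-‖z.1‖ ^ 2 / (4 * z.2))
      * (‖z.1‖ ^ 2 / (4 * z.2 ^ 2) - n / (2 * z.2))
  else 0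

lemma hk_norm_add_single_sq (n : ℕ) (x : EuclideanSpace ℝ (Fin n)) (i : Fin n) (s : ℝ) :
    ‖x + s • EuclideanSpace.single i 1‖ ^ 2 = ‖x‖ ^ 2 + 2 * (x i) * s + s ^ 2 := by
  rw [norm_add_sq_real, real_inner_smul_right, EuclideanSpace.inner_single_right,
    norm_smul, EuclideanSpace.norm_single]
  simp [mul_pow]
  ring

lemma hk_norm_sq_eq_sum (n : ℕ) (x : EuclideanSpace ℝ (Fin n)) : ‖x‖ ^ 2 = ∑ i, (x i) ^ 2 := by
  rw [EuclideanSpace.norm_eq, Real.sq_sqrt (by positivity)]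
  simp [sq_abs]

lemma hk_deriv2_aux (C A b t : ℝ) (ht : 0 < t) :
    iteratedDeriv 2 (fun s : ℝ => C * Real.exp (-(A + 2 * b * s + s ^ 2) / (4 * t))) 0
      = C * Real.exp (-A / (4 * t)) * (b ^ 2 / (4 * t ^ 2) - 1 / (2 * t)) := by
  set q : ℝ → ℝ := fun s => -(A + 2 * b * s + s ^ 2) / (4 * t) with hqdef
  have hq : ∀ s : ℝ, HasDerivAt q (-(2 * b + 2 * s) / (4 * t)) s := by
    intro s
    have h1 : HasDerivAt (fun s : ℝ => -(A + 2 * b * s + s ^ 2)) (-(2 * b + 2 * s)) s := by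
      have : HasDerivAt (fun s : ℝ => A + 2 * b * s + s ^ 2) (2 * b + 2 * s) s := by
        exact ((((hasDerivAt_id' s).const_mul (2 * b)).const_add A).add
          (hasDerivAt_pow 2 s)).congr_deriv (by simp)
      exact this.neg
    exact h1.div_const (4 * t)
  have hf : ∀ s : ℝ, HasDerivAt (fun s : ℝ => C * Real.exp (q s))
      (C * (Real.exp (q s) * (-(2 * b + 2 * s) / (4 * t)))) s := fun s => ((hq s).exp).const_mul C
  have hd1 : deriv (fun s : ℝ => C * Real.exp (q s))
      = fun s => C * (Real.exp (q s) * (-(2 * b + 2 * s) / (4 * t))) :=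
    funext fun s => (hf s).deriv
  have hlin : HasDerivAt (fun s : ℝ => -(2 * b + 2 * s) / (4 * t)) (-2 / (4 * t)) 0 := by
    have : HasDerivAt (fun s : ℝ => -(2 * b + 2 * s)) (-2) 0 := by
      exact ((((hasDerivAt_id' (0:ℝ)).const_mul 2).const_add (2 * b)).neg).congr_deriv (by ring)
    exact this.div_const (4 * t)
  have hg : HasDerivAt (fun s : ℝ => C * (Real.exp (q s) * (-(2 * b + 2 * s) / (4 * t))))
      (C * ((Real.exp (q 0) * (-(2 * b + 2 * 0) / (4 * t))) * (-(2 * b + 2 * 0) / (4 * t))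
        + Real.exp (q 0) * (-2 / (4 * t)))) 0 :=
    (((hq 0).exp).mul hlin).const_mul C
  rw [iteratedDeriv_succ, iteratedDeriv_one]
  rw [hd1]
  rw [hg.deriv]
  have hq0 : q 0 = -A / (4 * t) := by simp [hqdef]
  rw [hq0]
  field_simp
  ring

lemma heatKerLap_eq (n : ℕ) (z : EuclideanSpace ℝ (Fin n) × ℝ) :
    heatKerLap n z = heatPhi n z := by
  obtain ⟨x, t⟩ := z
  by_cases ht : 0 < t
  · have hterm : ∀ i : Fin n,
        iteratedDeriv 2 (fun s : ℝ => heatKer n (x + s • EuclideanSpace.single i 1, t)) 0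
          = (4 * π * t) ^ (-(n : ℝ) / 2) * Real.exp (-‖x‖ ^ 2 / (4 * t))
            * ((x i) ^ 2 / (4 * t ^ 2) - 1 / (2 * t)) := by
      intro i
      have hfun : (fun s : ℝ => heatKer n (x + s • EuclideanSpace.single i 1, t))
          = fun s : ℝ => (4 * π * t) ^ (-(n : ℝ) / 2)
              * Real.exp (-(‖x‖ ^ 2 + 2 * (x i) * s + s ^ 2) / (4 * t)) := by
        funext s
        rw [heatKer, if_pos ht]
        rw [hk_norm_add_single_sq]
      rw [hfun, hk_deriv2_aux _ _ _ _ ht]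
    have hsum : heatKerLap n (x, t)
        = ∑ i : Fin n, ((4 * π * t) ^ (-(n : ℝ) / 2) * Real.exp (-‖x‖ ^ 2 / (4 * t))
            * ((x i) ^ 2 / (4 * t ^ 2) - 1 / (2 * t))) := by
      rw [heatKerLap]
      exact Finset.sum_congr rfl fun i _ => hterm i
    rw [hsum, heatPhi, if_pos ht]
    rw [← Finset.mul_sum]
    congr 1
    rw [Finset.sum_sub_distrib, ← Finset.sum_div, ← hk_norm_sq_eq_sum,
      Finset.sum_const, Finset.card_univ, Fintype.card_fin, nsmul_eq_mul]
    ring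
  · have : heatKerLap n (x, t) = 0 := by
      rw [heatKerLap]
      apply Finset.sum_eq_zero
      intro i _
      have : (fun s : ℝ => heatKer n (x + s • EuclideanSpace.single i 1, t)) = fun _ => (0:ℝ) := by
        funext s; rw [heatKer, if_neg ht]
      rw [this]
      simp [iteratedDeriv_succ, iteratedDeriv_zero]
    rw [this, heatPhi, if_neg ht]

lemma hk_tendsto_master (p c : ℝ) (hc : 0 < c) :
    Tendsto (fun t : ℝ => if 0 < t then t ^ p * Real.exp (-c / t) else 0) (𝓝 0) (𝓝 0) := by
  have h : Tendsto (fun t : ℝ => if 0 < t then t ^ p * Real.exp (-c / t) else 0)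
      (𝓝[≤] (0:ℝ) ⊔ 𝓝[>] (0:ℝ)) (𝓝 0) := by
    rw [tendsto_sup]
    constructor
    · apply Tendsto.congr' _ tendsto_const_nhds
      filter_upwards [eventually_mem_nhdsWithin] with t (ht : t ∈ Iic (0:ℝ))
      rw [if_neg (not_lt.mpr ht)]
    · have h0 : Tendsto (fun u : ℝ => u ^ (-p) * Real.exp (-c * u)) atTop (𝓝 0) :=
        tendsto_rpow_mul_exp_neg_mul_atTop_nhds_zero (-p) c hc
      have h1 : Tendsto (fun t : ℝ => (t⁻¹) ^ (-p) * Real.exp (-c * t⁻¹)) (𝓝[>] (0:ℝ)) (𝓝 0) :=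
        h0.comp tendsto_inv_nhdsGT_zero
      apply h1.congr'
      filter_upwards [eventually_mem_nhdsWithin] with t (ht : t ∈ Ioi (0:ℝ))
      have ht' : (0:ℝ) < t := ht
      rw [if_pos ht']
      rw [Real.inv_rpow ht'.le, Real.rpow_neg ht'.le, inv_inv]
      rw [neg_div, div_eq_mul_inv, ← neg_mul]
  rwa [nhdsLE_sup_nhdsGT] at h

lemma hk_rpow_contAt (n : ℕ) (t : ℝ) (ht : 0 < t) :
    ContinuousAt (fun u : ℝ => (4 * π * u) ^ (-(n : ℝ) / 2)) t := by
  have h4 : (4 * π * t) ≠ 0 := by positivity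
  exact (Real.continuousAt_rpow_const _ _ (Or.inl h4)).comp
    (continuous_const.mul continuous_id).continuousAt

lemma heatKer_contAt_pos (n : ℕ) (z : EuclideanSpace ℝ (Fin n) × ℝ) (hz : 0 < z.2) :
    ContinuousAt (heatKer n) z := by
  have hev : ∀ᶠ w : EuclideanSpace ℝ (Fin n) × ℝ in 𝓝 z, 0 < w.2 :=
    (continuous_snd.continuousAt (x := z)).eventually_const_lt hz
  have hform : ContinuousAt (fun w : EuclideanSpace ℝ (Fin n) × ℝ =>
      (4 * π * w.2) ^ (-(n : ℝ) / 2) * Real.exp (-‖w.1‖ ^ 2 / (4 * w.2))) z := by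
    apply ContinuousAt.mul
    · exact (hk_rpow_contAt n z.2 hz).comp continuous_snd.continuousAt
    · apply Real.continuous_exp.continuousAt.comp
      exact ContinuousAt.div ((continuous_norm.comp continuous_fst).pow 2).neg.continuousAt
        (continuous_const.mul continuous_snd).continuousAt (by positivity)
  apply hform.congr
  filter_upwards [hev] with w hw
  rw [heatKer, if_pos hw]

lemma heatPhi_contAt_pos (n : ℕ) (z : EuclideanSpace ℝ (Fin n) × ℝ) (hz : 0 < z.2) :
    ContinuousAt (heatPhi n) z := by
  have hev : ∀ᶠ w : EuclideanSpace ℝ (Fin n) × ℝ in 𝓝 z, 0 < w.2 :=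
    (continuous_snd.continuousAt (x := z)).eventually_const_lt hz
  have hform : ContinuousAt (fun w : EuclideanSpace ℝ (Fin n) × ℝ =>
      (4 * π * w.2) ^ (-(n : ℝ) / 2) * Real.exp (-‖w.1‖ ^ 2 / (4 * w.2))
        * (‖w.1‖ ^ 2 / (4 * w.2 ^ 2) - (n : ℝ) / (2 * w.2))) z := by
    apply ContinuousAt.mul
    · apply ContinuousAt.mul
      · exact (hk_rpow_contAt n z.2 hz).comp continuous_snd.continuousAt
      · apply Real.continuous_exp.continuousAt.comp
        exact ContinuousAt.div ((continuous_norm.comp continuous_fst).pow 2).neg.continuousAt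
          (continuous_const.mul continuous_snd).continuousAt (by positivity)
    · apply ContinuousAt.sub
      · exact ContinuousAt.div ((continuous_norm.comp continuous_fst).pow 2).continuousAt
          (continuous_const.mul (continuous_snd.pow 2)).continuousAt (by positivity)
      · exact ContinuousAt.div continuousAt_const
          (continuous_const.mul continuous_snd).continuousAt (by positivity)
  apply hform.congr
  filter_upwards [hev] with w hw
  rw [heatPhi, if_pos hw]

lemma heatKer_contAt_neg (n : ℕ) (z : EuclideanSpace ℝ (Fin n) × ℝ) (hz : z.2 < 0) :
    ContinuousAt (heatKer n) z := by
  have hev : ∀ᶠ w : EuclideanSpace ℝ (Fin n) × ℝ in 𝓝 z, w.2 < 0 :=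
    (continuous_snd.continuousAt (x := z)).eventually_lt_const hz
  apply continuousAt_const.congr
  filter_upwards [hev] with w hw
  rw [heatKer, if_neg (by linarith)]

lemma heatPhi_contAt_neg (n : ℕ) (z : EuclideanSpace ℝ (Fin n) × ℝ) (hz : z.2 < 0) :
    ContinuousAt (heatPhi n) z := by
  have hev : ∀ᶠ w : EuclideanSpace ℝ (Fin n) × ℝ in 𝓝 z, w.2 < 0 :=
    (continuous_snd.continuousAt (x := z)).eventually_lt_const hz
  apply continuousAt_const.congr
  filter_upwards [hev] with w hw
  rw [heatPhi, if_neg (by linarith)]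

lemma heatKer_contAt_zero (n : ℕ) (x₀ : EuclideanSpace ℝ (Fin n)) (hx : x₀ ≠ 0) :
    ContinuousAt (heatKer n) (x₀, 0) := by
  set d : ℝ := ‖x₀‖ with hd
  have hd0 : 0 < d := by simpa [hd] using norm_pos_iff.mpr hx
  set c2 : ℝ := d ^ 2 / 16 with hc2
  have hc20 : 0 < c2 := by positivity
  have hKval : heatKer n (x₀, 0) = 0 := by rw [heatKer, if_neg (lt_irrefl 0)]
  rw [ContinuousAt, hKval]
  set B : ℝ → ℝ := fun t =>
    (4 * π) ^ (-(n : ℝ) / 2) * (if 0 < t then t ^ (-(n : ℝ) / 2) * Real.exp (-c2 / t) else 0)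
    with hB
  have hBlim : Tendsto B (𝓝 0) (𝓝 0) := by
    have := (hk_tendsto_master (-(n : ℝ) / 2) c2 hc20).const_mul ((4 * π) ^ (-(n : ℝ) / 2))
    simpa [hB] using this
  have hevnorm : ∀ᶠ w : EuclideanSpace ℝ (Fin n) × ℝ in 𝓝 (x₀, 0), d / 2 < ‖w.1‖ :=
    ((continuous_norm.comp continuous_fst).continuousAt (x := (x₀, 0))).eventually_const_lt
      (by simpa [← hd] using half_lt_self hd0)
  have hcomp : Tendsto (fun w : EuclideanSpace ℝ (Fin n) × ℝ => B w.2) (𝓝 (x₀, 0)) (𝓝 0) :=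
    hBlim.comp (continuous_snd.tendsto _)
  apply squeeze_zero_norm' _ hcomp
  filter_upwards [hevnorm] with w hw
  by_cases hw2 : 0 < w.2
  · have h1 : 0 < 4 * π * w.2 := by positivity
    rw [heatKer, if_pos hw2, hB]
    simp only [if_pos hw2]
    rw [Real.norm_eq_abs, abs_mul, abs_of_pos (Real.rpow_pos_of_pos h1 _),
      abs_of_pos (Real.exp_pos _)]
    rw [show (4:ℝ) * π * w.2 = (4 * π) * w.2 by ring,
      Real.mul_rpow (by positivity) hw2.le, mul_assoc]
    apply mul_le_mul_of_nonneg_left _ (by positivity)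
    apply mul_le_mul_of_nonneg_left _ (by positivity)
    apply Real.exp_le_exp.mpr
    rw [neg_div, neg_div, neg_le_neg_iff]
    have hnw : c2 ≤ ‖w.1‖ ^ 2 / 4 := by
      have h2 : (d / 2) ^ 2 ≤ ‖w.1‖ ^ 2 := pow_le_pow_left₀ (by positivity) hw.le 2
      nlinarith
    calc c2 / w.2 ≤ (‖w.1‖ ^ 2 / 4) / w.2 := by gcongr
      _ = ‖w.1‖ ^ 2 / (4 * w.2) := by ring
  · rw [heatKer, if_neg hw2, hB]
    simp [if_neg hw2]

lemma heatPhi_contAt_zero (n : ℕ) (x₀ : EuclideanSpace ℝ (Fin n)) (hx : x₀ ≠ 0) :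
    ContinuousAt (heatPhi n) (x₀, 0) := by
  set d : ℝ := ‖x₀‖ with hd
  have hd0 : 0 < d := by simpa [hd] using norm_pos_iff.mpr hx
  set c2 : ℝ := d ^ 2 / 16 with hc2
  have hc20 : 0 < c2 := by positivity
  have hKval : heatPhi n (x₀, 0) = 0 := by rw [heatPhi, if_neg (lt_irrefl 0)]
  rw [ContinuousAt, hKval]
  set q : ℝ := -(n : ℝ) / 2 with hq
  set B : ℝ → ℝ := fun t =>
    (4 * π) ^ q * ((d + 1) ^ 2 / 4 * (if 0 < t then t ^ (q - 2) * Real.exp (-c2 / t) else 0)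
      + (n : ℝ) / 2 * (if 0 < t then t ^ (q - 1) * Real.exp (-c2 / t) else 0)) with hB
  have hBlim : Tendsto B (𝓝 0) (𝓝 0) := by
    have h1 := (hk_tendsto_master (q - 2) c2 hc20).const_mul ((d + 1) ^ 2 / 4)
    have h2 := (hk_tendsto_master (q - 1) c2 hc20).const_mul ((n : ℝ) / 2)
    have := ((h1.add h2).const_mul ((4 * π) ^ q))
    simpa [hB] using this
  have hev1 : ∀ᶠ w : EuclideanSpace ℝ (Fin n) × ℝ in 𝓝 (x₀, 0), d / 2 < ‖w.1‖ :=
    ((continuous_norm.comp continuous_fst).continuousAt (x := (x₀, 0))).eventually_const_lt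
      (by simpa [← hd] using half_lt_self hd0)
  have hev2 : ∀ᶠ w : EuclideanSpace ℝ (Fin n) × ℝ in 𝓝 (x₀, 0), ‖w.1‖ < d + 1 :=
    ((continuous_norm.comp continuous_fst).continuousAt (x := (x₀, 0))).eventually_lt_const
      (by simp [hd])
  have hcomp : Tendsto (fun w : EuclideanSpace ℝ (Fin n) × ℝ => B w.2) (𝓝 (x₀, 0)) (𝓝 0) :=
    hBlim.comp (continuous_snd.tendsto _)
  apply squeeze_zero_norm' _ hcomp
  filter_upwards [hev1, hev2] with w hw1 hw3
  by_cases hw2 : 0 < w.2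
  · set t : ℝ := w.2 with htdef
    have h4πt : (0:ℝ) < 4 * π * t := by positivity
    rw [heatPhi, if_pos hw2, hB]
    simp only [if_pos hw2]
    rw [Real.norm_eq_abs, abs_mul, abs_mul, abs_of_pos (Real.rpow_pos_of_pos h4πt _),
      abs_of_pos (Real.exp_pos _)]
    have hbr : |‖w.1‖ ^ 2 / (4 * t ^ 2) - (n : ℝ) / (2 * t)|
        ≤ (d + 1) ^ 2 / (4 * t ^ 2) + (n : ℝ) / (2 * t) := by
      refine (abs_sub _ _).trans ?_
      rw [abs_of_nonneg (by positivity), abs_of_nonneg (by positivity)]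
      gcongr
    have hexp : Real.exp (-‖w.1‖ ^ 2 / (4 * t)) ≤ Real.exp (-c2 / t) := by
      apply Real.exp_le_exp.mpr
      rw [neg_div, neg_div, neg_le_neg_iff]
      have hnw : c2 ≤ ‖w.1‖ ^ 2 / 4 := by
        have h2 : (d / 2) ^ 2 ≤ ‖w.1‖ ^ 2 := pow_le_pow_left₀ (by positivity) hw1.le 2
        nlinarith
      calc c2 / t ≤ (‖w.1‖ ^ 2 / 4) / t := by gcongr
        _ = ‖w.1‖ ^ 2 / (4 * t) := by ring
    calc (4 * π * t) ^ q * Real.exp (-‖w.1‖ ^ 2 / (4 * t))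
          * |‖w.1‖ ^ 2 / (4 * t ^ 2) - (n : ℝ) / (2 * t)|
        ≤ (4 * π * t) ^ q * Real.exp (-c2 / t)
          * ((d + 1) ^ 2 / (4 * t ^ 2) + (n : ℝ) / (2 * t)) := by
          apply mul_le_mul (mul_le_mul_of_nonneg_left hexp (by positivity)) hbr
            (abs_nonneg _) (by positivity)
      _ = (4 * π) ^ q * ((d + 1) ^ 2 / 4 * (t ^ (q - 2) * Real.exp (-c2 / t))
          + (n : ℝ) / 2 * (t ^ (q - 1) * Real.exp (-c2 / t))) := by
          rw [show (4:ℝ) * π * t = (4 * π) * t by ring,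
            Real.mul_rpow (by positivity) hw2.le,
            Real.rpow_sub hw2, Real.rpow_sub hw2, Real.rpow_one, Real.rpow_two]
          field_simp
  · rw [heatPhi, if_neg hw2, hB]
    simp [if_neg hw2]

lemma heatKer_contAt (n : ℕ) (z : EuclideanSpace ℝ (Fin n) × ℝ) (hz : z.1 ≠ 0 ∨ z.2 ≠ 0) :
    ContinuousAt (heatKer n) z := by
  rcases lt_trichotomy z.2 0 with h | h | h
  · exact heatKer_contAt_neg n z h
  · rcases hz with hz | hz
    · have : z = (z.1, 0) := by rw [← h]
      rw [this]
      exact heatKer_contAt_zero n z.1 hz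
    · exact absurd h hz
  · exact heatKer_contAt_pos n z h

lemma heatPhi_contAt (n : ℕ) (z : EuclideanSpace ℝ (Fin n) × ℝ) (hz : z.1 ≠ 0 ∨ z.2 ≠ 0) :
    ContinuousAt (heatPhi n) z := by
  rcases lt_trichotomy z.2 0 with h | h | h
  · exact heatPhi_contAt_neg n z h
  · rcases hz with hz | hz
    · have : z = (z.1, 0) := by rw [← h]
      rw [this]
      exact heatPhi_contAt_zero n z.1 hz
    · exact absurd h hz
  · exact heatPhi_contAt_pos n z h

lemma heatKer_slice_continuous (n : ℕ) (x : EuclideanSpace ℝ (Fin n)) (hx : x ≠ 0) :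
    Continuous (fun t : ℝ => heatKer n (x, t)) := by
  rw [continuous_iff_continuousAt]
  intro t
  exact (heatKer_contAt n (x, t) (Or.inl hx)).comp
    (continuous_const.prodMk continuous_id).continuousAt

lemma heatPhi_slice_continuous (n : ℕ) (x : EuclideanSpace ℝ (Fin n)) (hx : x ≠ 0) :
    Continuous (fun t : ℝ => heatPhi n (x, t)) := by
  rw [continuous_iff_continuousAt]
  intro t
  exact (heatPhi_contAt n (x, t) (Or.inl hx)).comp
    (continuous_const.prodMk continuous_id).continuousAt

lemma hasDerivAt_heatKer (n : ℕ) (x : EuclideanSpace ℝ (Fin n)) (t : ℝ) (ht : 0 < t) :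
    HasDerivAt (fun u : ℝ => heatKer n (x, u)) (heatPhi n (x, t)) t := by
  set q : ℝ := -(n : ℝ) / 2 with hqdef
  set A : ℝ := ‖x‖ ^ 2 with hA
  have h4πt : (0:ℝ) < 4 * π * t := by positivity
  have h1 : HasDerivAt (fun u : ℝ => (4 * π * u) ^ q) (q * (4 * π * t) ^ (q - 1) * (4 * π)) t := by
    have hb : HasDerivAt (fun u : ℝ => 4 * π * u) (4 * π) t := by
      simpa using (hasDerivAt_id t).const_mul (4 * π)
    have ho : HasDerivAt (fun y : ℝ => y ^ q) (q * (4 * π * t) ^ (q - 1)) (4 * π * t) :=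
      Real.hasDerivAt_rpow_const (Or.inl h4πt.ne')
    exact ho.comp t hb
  have h2 : HasDerivAt (fun u : ℝ => Real.exp (-A / (4 * u)))
      (Real.exp (-A / (4 * t)) * (A / (4 * t ^ 2))) t := by
    have hinner : HasDerivAt (fun u : ℝ => -A / (4 * u)) (A / (4 * t ^ 2)) t := by
      have hi : HasDerivAt (fun u : ℝ => (-A / 4) * u⁻¹) ((-A / 4) * (-(t ^ 2)⁻¹)) t :=
        (hasDerivAt_inv ht.ne').const_mul _
      have : (-A / 4) * (-(t ^ 2)⁻¹) = A / (4 * t ^ 2) := by field_simp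
      rw [this] at hi
      apply hi.congr_of_eventuallyEq
      filter_upwards [Ioi_mem_nhds ht] with u (hu : 0 < u)
      field_simp
    exact hinner.exp
  have h := h1.mul h2
  have heq : (fun u : ℝ => heatKer n (x, u)) =ᶠ[𝓝 t]
      fun u : ℝ => (4 * π * u) ^ q * Real.exp (-A / (4 * u)) := by
    filter_upwards [Ioi_mem_nhds ht] with u (hu : 0 < u)
    rw [heatKer, if_pos hu]
  have h' := h.congr_of_eventuallyEq heq
  refine h'.congr_deriv (Eq.symm ?_)
  rw [heatPhi, if_pos ht]
  rw [Real.rpow_sub_one h4πt.ne']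
  have hπ : (0:ℝ) < π := Real.pi_pos
  rw [hqdef, hA]
  field_simp
  ring

lemma heatKer_zero (n : ℕ) (x : EuclideanSpace ℝ (Fin n)) : heatKer n (x, 0) = 0 := by
  rw [heatKer, if_neg (lt_irrefl 0)]

/-- FTC on a time slice. -/
lemma integral_Ioo_heatPhi (n : ℕ) (x : EuclideanSpace ℝ (Fin n)) (hx : x ≠ 0)
    (a b : ℝ) (ha : 0 ≤ a) (hab : a ≤ b) :
    ∫ t in Ioo a b, heatPhi n (x, t) = heatKer n (x, b) - heatKer n (x, a) := by
  rw [← integral_Ioc_eq_integral_Ioo, ← intervalIntegral.integral_of_le hab]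
  apply intervalIntegral.integral_eq_sub_of_hasDeriv_right_of_le hab
  · exact (heatKer_slice_continuous n x hx).continuousOn
  · intro t htI
    exact (hasDerivAt_heatKer n x t (lt_of_le_of_lt ha htI.1)).hasDerivWithinAt
  · exact (heatPhi_slice_continuous n x hx).intervalIntegrable a b

lemma heatPhi_nonpos_zero (n : ℕ) (x : EuclideanSpace ℝ (Fin n)) (t : ℝ) (ht : ¬ 0 < t) :
    heatPhi n (x, t) = 0 := by rw [heatPhi, if_neg ht]

/-- Scaling lemma: the ball integral is independent of `r`. -/
lemma ball_integral_scaling (n : ℕ) (r : ℝ) (hr : 0 < r) :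
    ∫ x in Metric.ball (0 : EuclideanSpace ℝ (Fin n)) r, heatKer n (x, r ^ 2)
      = ∫ y in Metric.ball (0 : EuclideanSpace ℝ (Fin n)) 1, heatKer n (y, 1) := by
  set f : EuclideanSpace ℝ (Fin n) → ℝ :=
    (Metric.ball (0 : EuclideanSpace ℝ (Fin n)) r).indicator (fun x => heatKer n (x, r ^ 2))
    with hf
  have h := MeasureTheory.Measure.integral_comp_smul (μ := volume) f r
  have hfr : ∀ y : EuclideanSpace ℝ (Fin n), f (r • y)
      = r ^ (-(n : ℝ)) * (Metric.ball (0 : EuclideanSpace ℝ (Fin n)) 1).indicator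
          (fun y => heatKer n (y, 1)) y := by
    intro y
    simp only [hf]
    have hmem : r • y ∈ Metric.ball (0 : EuclideanSpace ℝ (Fin n)) r ↔
        y ∈ Metric.ball (0 : EuclideanSpace ℝ (Fin n)) 1 := by
      simp only [mem_ball_zero_iff, norm_smul, Real.norm_eq_abs, abs_of_pos hr]
      constructor
      · intro hy
        nlinarith [norm_nonneg y]
      · intro hy
        nlinarith [norm_nonneg y]
    by_cases hy : y ∈ Metric.ball (0 : EuclideanSpace ℝ (Fin n)) 1
    · rw [Set.indicator_of_mem (hmem.mpr hy), Set.indicator_of_mem hy]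
      have hval : heatKer n (r • y, r ^ 2) = r ^ (-(n : ℝ)) * heatKer n (y, 1) := by
        rw [heatKer, heatKer]
        rw [if_pos (by positivity : (0:ℝ) < r ^ 2), if_pos (by norm_num : (0:ℝ) < 1)]
        have hnorm : ‖r • y‖ ^ 2 = r ^ 2 * ‖y‖ ^ 2 := by
          rw [norm_smul, Real.norm_eq_abs, mul_pow, sq_abs]
        rw [hnorm]
        have hexp : -(r ^ 2 * ‖y‖ ^ 2) / (4 * r ^ 2) = -‖y‖ ^ 2 / (4 * 1) := by
          field_simp
        rw [hexp]
        have hrp : (4 * π * r ^ 2) ^ (-(n : ℝ) / 2)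
            = r ^ (-(n : ℝ)) * (4 * π * 1) ^ (-(n : ℝ) / 2) := by
          rw [show (4:ℝ) * π * r ^ 2 = (4 * π * 1) * r ^ 2 by ring]
          rw [Real.mul_rpow (by positivity) (by positivity)]
          rw [← Real.rpow_natCast r 2, ← Real.rpow_mul hr.le]
          ring_nf
        rw [hrp]
        ring
      rw [hval]
    · rw [Set.indicator_of_notMem (fun hc => hy (hmem.mp hc)), Set.indicator_of_notMem hy,
        mul_zero]
  rw [funext hfr] at h
  rw [integral_const_mul] at h
  rw [hf] at h
  rw [integral_indicator measurableSet_ball, integral_indicator measurableSet_ball]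
    at h
  have hfin : Module.finrank ℝ (EuclideanSpace ℝ (Fin n)) = n := finrank_euclideanSpace_fin
  rw [hfin] at h
  have hrn : |((r ^ n : ℝ))⁻¹| = r ^ (-(n : ℝ)) := by
    rw [abs_of_pos (by positivity), Real.rpow_neg hr.le, Real.rpow_natCast]
  rw [smul_eq_mul, hrn] at h
  have hrpos : (0:ℝ) < r ^ (-(n : ℝ)) := Real.rpow_pos_of_pos hr _
  have := mul_left_cancel₀ hrpos.ne' h
  exact this.symm

end Aux

/-- cancellation property 𝒫₃ for the heat kernel: the integral of
`Δ_x G` over any parabolic annulus `{r₁ < ρ(x,t) < r₂}`,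
`ρ(x,t) = max{|x|, |t|^{1/2}}`, vanishes. -/
theorem heat_kernel_cancellation (n : ℕ) (hn : 1 ≤ n) (r₁ r₂ : ℝ)
    (h₁ : 0 < r₁) (h₂ : r₁ < r₂) :
    ∫ z in {z : EuclideanSpace ℝ (Fin n) × ℝ |
        r₁ < max ‖z.1‖ (|z.2| ^ (1 / 2 : ℝ)) ∧ max ‖z.1‖ (|z.2| ^ (1 / 2 : ℝ)) < r₂},
      heatKerLap n z = 0 := by
  classical
  have hr₂ : 0 < r₂ := h₁.trans h₂
  haveI : Nonempty (Fin n) := ⟨⟨0, hn⟩⟩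
  set ρ : EuclideanSpace ℝ (Fin n) × ℝ → ℝ :=
    fun z => max ‖z.1‖ (|z.2| ^ (1 / 2 : ℝ)) with hρdef
  set A : Set (EuclideanSpace ℝ (Fin n) × ℝ) := {z | r₁ < ρ z ∧ ρ z < r₂} with hAdef
  have hρ_sqrt : ∀ z : EuclideanSpace ℝ (Fin n) × ℝ, ρ z = max ‖z.1‖ (Real.sqrt |z.2|) := by
    intro z
    rw [hρdef, Real.sqrt_eq_rpow]
  -- membership characterizations
  have hmemA : ∀ z : EuclideanSpace ℝ (Fin n) × ℝ,
      z ∈ A ↔ ((r₁ < ‖z.1‖ ∨ r₁ ^ 2 < |z.2|) ∧ (‖z.1‖ < r₂ ∧ |z.2| < r₂ ^ 2)) := by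
    intro z
    rw [hAdef, Set.mem_setOf_eq, hρ_sqrt z]
    rw [lt_max_iff, max_lt_iff, Real.lt_sqrt h₁.le, Real.sqrt_lt' hr₂]
  -- continuity of ρ
  have hρcont : Continuous ρ := by
    apply Continuous.max (continuous_norm.comp continuous_fst)
    rw [continuous_iff_continuousAt]
    intro z
    exact (Real.continuousAt_rpow_const _ _ (Or.inr (by norm_num))).comp
      ((continuous_abs.comp continuous_snd).continuousAt)
  have hAopen : IsOpen A := by
    have : A = ρ ⁻¹' Set.Ioo r₁ r₂ := rfl
    rw [this]
    exact isOpen_Ioo.preimage hρcont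
  have hAmeas : MeasurableSet A := hAopen.measurableSet
  -- compact superset
  set K : Set (EuclideanSpace ℝ (Fin n) × ℝ) := ρ ⁻¹' Set.Icc r₁ r₂ with hKdef
  have hAK : A ⊆ K := fun z hz => ⟨hz.1.le, hz.2.le⟩
  have hKne : ∀ z ∈ K, z.1 ≠ 0 ∨ z.2 ≠ 0 := by
    intro z hz
    by_contra hcon
    push_neg at hcon
    obtain ⟨hz1, hz2⟩ := hcon
    have hρ0 : ρ z = 0 := by
      rw [hρ_sqrt z, hz1, hz2]
      simp
    have hge : r₁ ≤ ρ z := hz.1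
    rw [hρ0] at hge
    linarith
  have hKcomp : IsCompact K := by
    apply Metric.isCompact_of_isClosed_isBounded (isClosed_Icc.preimage hρcont)
    apply (Metric.isBounded_closedBall (x := (0 : EuclideanSpace ℝ (Fin n) × ℝ))
      (r := max r₂ (r₂ ^ 2))).subset
    intro z hz
    rw [Metric.mem_closedBall, dist_zero_right, Prod.norm_def]
    have h1 : ‖z.1‖ ≤ r₂ := (le_max_left _ _).trans ((hρ_sqrt z ▸ hz.2 : ρ z ≤ r₂))
    have h2 : |z.2| ≤ r₂ ^ 2 := by
      have hs : Real.sqrt |z.2| ≤ r₂ := (le_max_right _ _).trans (hρ_sqrt z ▸ hz.2)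
      have := pow_le_pow_left₀ (Real.sqrt_nonneg _) hs 2
      rwa [Real.sq_sqrt (abs_nonneg _)] at this
    rw [Real.norm_eq_abs]
    exact max_le_max h1 h2
  -- integrability
  have hKcont : ContinuousOn (heatPhi n) K := fun z hz =>
    (heatPhi_contAt n z (hKne z hz)).continuousWithinAt
  have hIntA : IntegrableOn (heatPhi n) A := (hKcont.integrableOn_compact hKcomp).mono_set hAK
  have hInd : Integrable (A.indicator (heatPhi n)) :=
    (integrable_indicator_iff hAmeas).mpr hIntA
  -- the x-slice value function
  set H : EuclideanSpace ℝ (Fin n) → ℝ := fun x =>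
    (Metric.ball (0 : EuclideanSpace ℝ (Fin n)) r₂).indicator
        (fun x => heatKer n (x, r₂ ^ 2)) x
      - (Metric.ball (0 : EuclideanSpace ℝ (Fin n)) r₁).indicator
        (fun x => heatKer n (x, r₁ ^ 2)) x with hHdef
  -- a.e. identification of the inner integral
  haveI : Nontrivial (EuclideanSpace ℝ (Fin n)) := inferInstance
  have hsphere : ∀ r : ℝ, volume (Metric.sphere (0 : EuclideanSpace ℝ (Fin n)) r) = 0 :=
    fun r => Measure.addHaar_sphere volume 0 r
  have hN : volume (Metric.sphere (0 : EuclideanSpace ℝ (Fin n)) 0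
      ∪ Metric.sphere 0 r₁ ∪ Metric.sphere 0 r₂) = 0 := by
    apply measure_union_null (measure_union_null (hsphere 0) (hsphere r₁)) (hsphere r₂)
  have hae0 : ∀ᵐ x : EuclideanSpace ℝ (Fin n), x ∉ (Metric.sphere (0 : EuclideanSpace ℝ (Fin n)) 0
      ∪ Metric.sphere 0 r₁ ∪ Metric.sphere 0 r₂) :=
    (measure_eq_zero_iff_ae_notMem (μ := volume)).mp hN
  have hae : (fun x : EuclideanSpace ℝ (Fin n) =>
      ∫ t : ℝ, A.indicator (heatPhi n) (x, t)) =ᵐ[volume] H := by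
    filter_upwards [hae0] with x hx
    simp only [Set.mem_union, not_or, Metric.mem_sphere, dist_zero_right] at hx
    obtain ⟨⟨hx0, hxr₁⟩, hxr₂⟩ := hx
    have hx0' : x ≠ 0 := fun hc => hx0 (by simp [hc])
    rcases lt_trichotomy ‖x‖ r₁ with hcase | hcase | hcase
    · -- inner region
      have hfun : (fun t : ℝ => A.indicator (heatPhi n) (x, t))
          = (Set.Ioo (r₁ ^ 2) (r₂ ^ 2)).indicator (fun t => heatPhi n (x, t)) := by
        funext t
        by_cases ht : 0 < t
        · have habs : |t| = t := abs_of_pos ht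
          have : (x, t) ∈ A ↔ t ∈ Set.Ioo (r₁ ^ 2) (r₂ ^ 2) := by
            rw [hmemA (x, t)]
            simp only [habs, Set.mem_Ioo]
            constructor
            · rintro ⟨h1 | h1, h2, h3⟩
              · exact absurd h1 (not_lt.mpr hcase.le)
              · exact ⟨h1, h3⟩
            · rintro ⟨h1, h2⟩
              exact ⟨Or.inr h1, hcase.trans h₂, h2⟩
          by_cases hmem : t ∈ Set.Ioo (r₁ ^ 2) (r₂ ^ 2)
          · rw [Set.indicator_of_mem hmem, Set.indicator_of_mem (this.mpr hmem)]
          · rw [Set.indicator_of_notMem hmem,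
              Set.indicator_of_notMem (fun hc => hmem (this.mp hc))]
        · rw [Set.indicator_of_notMem (fun hc : t ∈ Set.Ioo (r₁ ^ 2) (r₂ ^ 2) =>
            ht (lt_of_le_of_lt (by positivity) hc.1))]
          by_cases hmem : (x, t) ∈ A
          · rw [Set.indicator_of_mem hmem, heatPhi_nonpos_zero n x t ht]
          · rw [Set.indicator_of_notMem hmem]
      rw [hfun, integral_indicator measurableSet_Ioo,
        integral_Ioo_heatPhi n x hx0' _ _ (by positivity) (by nlinarith)]
      rw [hHdef]
      beta_reduce
      have hb2 : x ∈ Metric.ball (0 : EuclideanSpace ℝ (Fin n)) r₂ :=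
        mem_ball_zero_iff.mpr (hcase.trans h₂)
      have hb1 : x ∈ Metric.ball (0 : EuclideanSpace ℝ (Fin n)) r₁ := mem_ball_zero_iff.mpr hcase
      rw [Set.indicator_of_mem hb2, Set.indicator_of_mem hb1]
    · exact absurd hcase hxr₁
    · rcases lt_trichotomy ‖x‖ r₂ with hcase2 | hcase2 | hcase2
      · -- middle region
        have hfun : (fun t : ℝ => A.indicator (heatPhi n) (x, t))
            = (Set.Ioo (0 : ℝ) (r₂ ^ 2)).indicator (fun t => heatPhi n (x, t)) := by
          funext t
          by_cases ht : 0 < t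
          · have habs : |t| = t := abs_of_pos ht
            have : (x, t) ∈ A ↔ t ∈ Set.Ioo (0 : ℝ) (r₂ ^ 2) := by
              rw [hmemA (x, t)]
              simp only [habs, Set.mem_Ioo]
              constructor
              · rintro ⟨_, _, h3⟩
                exact ⟨ht, h3⟩
              · rintro ⟨_, h2⟩
                exact ⟨Or.inl hcase, hcase2, h2⟩
            by_cases hmem : t ∈ Set.Ioo (0 : ℝ) (r₂ ^ 2)
            · rw [Set.indicator_of_mem hmem, Set.indicator_of_mem (this.mpr hmem)]
            · rw [Set.indicator_of_notMem hmem,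
                Set.indicator_of_notMem (fun hc => hmem (this.mp hc))]
          · rw [Set.indicator_of_notMem (fun hc : t ∈ Set.Ioo (0 : ℝ) (r₂ ^ 2) => ht hc.1)]
            by_cases hmem : (x, t) ∈ A
            · rw [Set.indicator_of_mem hmem, heatPhi_nonpos_zero n x t ht]
            · rw [Set.indicator_of_notMem hmem]
        rw [hfun, integral_indicator measurableSet_Ioo,
          integral_Ioo_heatPhi n x hx0' _ _ le_rfl (by positivity), heatKer_zero]
        rw [hHdef]
        beta_reduce
        have hb2 : x ∈ Metric.ball (0 : EuclideanSpace ℝ (Fin n)) r₂ := mem_ball_zero_iff.mpr hcase2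
        have hb1 : x ∉ Metric.ball (0 : EuclideanSpace ℝ (Fin n)) r₁ := fun hc =>
          absurd (mem_ball_zero_iff.mp hc) (not_lt.mpr hcase.le)
        rw [Set.indicator_of_mem hb2, Set.indicator_of_notMem hb1]
      · exact absurd hcase2 hxr₂
      · -- outer region
        have hfun : (fun t : ℝ => A.indicator (heatPhi n) (x, t)) = fun _ => (0 : ℝ) := by
          funext t
          apply Set.indicator_of_notMem
          intro hc
          rw [hmemA (x, t)] at hc
          exact absurd hc.2.1 (not_lt.mpr hcase2.le)
        rw [hfun]
        rw [hHdef]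
        beta_reduce
        have hb2 : x ∉ Metric.ball (0 : EuclideanSpace ℝ (Fin n)) r₂ := fun hc =>
          absurd (mem_ball_zero_iff.mp hc) (not_lt.mpr hcase2.le)
        have hb1 : x ∉ Metric.ball (0 : EuclideanSpace ℝ (Fin n)) r₁ := fun hc =>
          absurd (mem_ball_zero_iff.mp hc) (not_lt.mpr (h₂.trans hcase2).le)
        rw [Set.indicator_of_notMem hb2, Set.indicator_of_notMem hb1]
        simp
  -- integrability of the two ball indicators
  have hballInt : ∀ r : ℝ, 0 < r → Integrable
      ((Metric.ball (0 : EuclideanSpace ℝ (Fin n)) r).indicator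
        (fun x => heatKer n (x, r ^ 2))) := by
    intro r hr
    apply (integrable_indicator_iff measurableSet_ball).mpr
    have hcont : Continuous (fun x : EuclideanSpace ℝ (Fin n) => heatKer n (x, r ^ 2)) := by
      rw [continuous_iff_continuousAt]
      intro x
      have hmk : Continuous (fun y : EuclideanSpace ℝ (Fin n) => (y, r ^ 2)) :=
        continuous_id.prodMk continuous_const
      exact ContinuousAt.comp (f := fun y : EuclideanSpace ℝ (Fin n) => (y, r ^ 2))
        (heatKer_contAt n (x, r ^ 2) (Or.inr (by positivity))) (hmk.continuousAt (x := x))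
    exact (hcont.continuousOn.integrableOn_compact (isCompact_closedBall _ _)).mono_set
      Metric.ball_subset_closedBall
  -- main computation
  calc ∫ z in A, heatKerLap n z = ∫ z in A, heatPhi n z := by
        simp only [heatKerLap_eq]
    _ = ∫ z, A.indicator (heatPhi n) z := (integral_indicator hAmeas).symm
    _ = ∫ x, ∫ t, A.indicator (heatPhi n) (x, t) := by
        rw [MeasureTheory.Measure.volume_eq_prod]
        apply MeasureTheory.integral_prod
        rwa [← MeasureTheory.Measure.volume_eq_prod]
    _ = ∫ x, H x := integral_congr_ae hae
    _ = (∫ x, (Metric.ball (0 : EuclideanSpace ℝ (Fin n)) r₂).indicator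
          (fun x => heatKer n (x, r₂ ^ 2)) x)
        - ∫ x, (Metric.ball (0 : EuclideanSpace ℝ (Fin n)) r₁).indicator
          (fun x => heatKer n (x, r₁ ^ 2)) x := by
        rw [hHdef]
        exact integral_sub (hballInt r₂ hr₂) (hballInt r₁ h₁)
    _ = (∫ x in Metric.ball (0 : EuclideanSpace ℝ (Fin n)) r₂, heatKer n (x, r₂ ^ 2))
        - ∫ x in Metric.ball (0 : EuclideanSpace ℝ (Fin n)) r₁, heatKer n (x, r₁ ^ 2) := by
        rw [integral_indicator measurableSet_ball, integral_indicator measurableSet_ball]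
    _ = 0 := by
        rw [ball_integral_scaling n r₂ hr₂, ball_integral_scaling n r₁ h₁, sub_self]
end
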